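/- Let w1, w2, w3, w4, w5 be positive real numbers. Then they satisfy the free-fermionic relations w1*w4 = w3*w5, w2*w3 = w4*w5, and w5*(w1+w2) = w3*w4 if and only if there exists a unique triple (λ, a, b) of positive real numbers with a² + b² = 1 such that w1 = λa², w2 = λb², w3 = λa, w4 = λb, w5 = λab. -/

import Mathlib

theorem free_fermionic_parametrization
    (w1 w2 w3 w4 w5 : ℝ) (h1 : 0 < w1) (h2 : 0 < w2) (h3 : 0 < w3)
    (h4 : 0 < w4) (h5 : 0 < w5) :
    (w1 * w4 = w3 * w5 ∧ w2 * w3 = w4 * w5 ∧ w5 * (w1 + w2) = w3 * w4) ↔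
    ∃! p : ℝ × ℝ × ℝ, 0 < p.1 ∧ 0 < p.2.1 ∧ 0 < p.2.2 ∧
      p.2.1 ^ 2 + p.2.2 ^ 2 = 1 ∧
      w1 = p.1 * p.2.1 ^ 2 ∧ w2 = p.1 * p.2.2 ^ 2 ∧
      w3 = p.1 * p.2.1 ∧ w4 = p.1 * p.2.2 ∧ w5 = p.1 * p.2.1 * p.2.2 := by
  have h1' := h1.ne'
  have h3' := h3.ne'
  have h4' := h4.ne'
  constructor
  · rintro ⟨e1, e2, e3⟩
    have K1 : w2 * w3 ^ 2 = w1 * w4 ^ 2 := by linear_combination w3 * e2 - w4 * e1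
    have K2 : w2 * (w1 + w2) = w4 ^ 2 := by
      have : w3 * (w2 * (w1 + w2)) = w3 * w4 ^ 2 := by
        linear_combination (w1 + w2) * e2 + w4 * e3
      exact mul_left_cancel₀ h3' this
    have K3 : w1 * (w1 + w2) = w3 ^ 2 := by
      have : w2 * (w1 * (w1 + w2)) = w2 * w3 ^ 2 := by
        linear_combination w1 * K2 - K1
      exact mul_left_cancel₀ h2.ne' this
    refine ⟨(w3 ^ 2 / w1, w1 / w3, w2 / w4), ⟨?_, ?_, ?_, ?_, ?_, ?_, ?_, ?_, ?_⟩, ?_⟩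
    · positivity
    · positivity
    · positivity
    · field_simp
      linear_combination w4 ^ 2 * K3 + w2 * K1
    · field_simp
    · field_simp
      linear_combination -K1
    · field_simp
    · field_simp
      linear_combination -K1
    · field_simp
      linear_combination -e2
    · rintro ⟨l, a, b⟩ ⟨hl, ha, hb, hab, q1, q2, q3, q4, q5⟩
      have ea : a = w1 / w3 := by
        field_simp
        linear_combination -q1 + a * q3
      have eb : b = w2 / w4 := by
        field_simp
        linear_combination -q2 + b * q4
      have el : l = w3 ^ 2 / w1 := by
        field_simp
        linear_combination l * q1 - (w3 + l * a) * q3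
      exact Prod.ext el (Prod.ext ea eb)
  · rintro ⟨⟨l, a, b⟩, ⟨hl, ha, hb, hab, q1, q2, q3, q4, q5⟩, -⟩
    dsimp only at hab q1 q2 q3 q4 q5
    refine ⟨?_, ?_, ?_⟩
    · rw [q1, q3, q4, q5]; ring
    · rw [q2, q3, q4, q5]; ring
    · rw [q1, q2, q3, q4, q5]; linear_combination l ^ 2 * a * b * hab
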